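/- Let f(x) = φ(x) − arcsin x for x ∈ [0,1], where φ(x) = (π(2 − √2)/(π − 2√2))·(√(1 + x) − √(1 − x)) / (√2(4 − π)/(π − 2√2) + √(1 + x) + √(1 − x)). Then the function t ↦ f(sin t)/(t³(π/2 − t)) tends, as t → (π/2)⁻, to the limit β = ((16√2 − 16) + (8 − 4√2)π − √2·π²)/((2√2 − 2)π³), and moreover β > 0. -/

import Mathlib

open Filter

/-- The upper bound `φ` for `arcsin` obtained by the λ-method of Mitrinović–Vasić. -/
noncomputable def phiBound (x : ℝ) : ℝ :=
  (Real.pi * (2 - Real.sqrt 2) / (Real.pi - 2 * Real.sqrt 2)) *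
      (Real.sqrt (1 + x) - Real.sqrt (1 - x)) /
    (Real.sqrt 2 * (4 - Real.pi) / (Real.pi - 2 * Real.sqrt 2) +
      Real.sqrt (1 + x) + Real.sqrt (1 - x))

noncomputable def Gfun (s : ℝ) : ℝ :=
  (Real.pi * (2 - Real.sqrt 2) / (Real.pi - 2 * Real.sqrt 2)) *
      (Real.sqrt 2 * Real.cos (s / 2) - Real.sqrt 2 * Real.sin (s / 2)) /
    (Real.sqrt 2 * (4 - Real.pi) / (Real.pi - 2 * Real.sqrt 2) +
      Real.sqrt 2 * Real.cos (s / 2) + Real.sqrt 2 * Real.sin (s / 2)) -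
  (Real.pi / 2 - s)

lemma sqrt2_lt : Real.sqrt 2 < 1.5 := by
  nlinarith [Real.sq_sqrt (by norm_num : (0:ℝ) ≤ 2), Real.sqrt_nonneg 2]

lemma sqrt2_gt : 1.4 < Real.sqrt 2 := by
  nlinarith [Real.sq_sqrt (by norm_num : (0:ℝ) ≤ 2), Real.sqrt_nonneg 2]

lemma hp_pos : 0 < Real.pi - 2 * Real.sqrt 2 := by
  have := Real.pi_gt_d6
  have := sqrt2_lt
  nlinarith

lemma hD0_pos : 0 < Real.sqrt 2 * (4 - Real.pi) / (Real.pi - 2 * Real.sqrt 2) +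
    Real.sqrt 2 * Real.cos (0 / 2) + Real.sqrt 2 * Real.sin (0 / 2) := by
  have h1 := hp_pos
  have h2 := Real.pi_lt_d6
  have h3 := sqrt2_gt
  simp only [zero_div, Real.cos_zero, Real.sin_zero, mul_one, mul_zero, add_zero]
  have : 0 < Real.sqrt 2 * (4 - Real.pi) / (Real.pi - 2 * Real.sqrt 2) := by
    apply div_pos; nlinarith; exact h1
  nlinarith

lemma Gfun_zero : Gfun 0 = 0 := by
  have h1 := hp_pos.ne'
  have ha : Real.sqrt 2 ^ 2 = 2 := Real.sq_sqrt (by norm_num)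
  have ha0 : Real.sqrt 2 ≠ 0 := by positivity
  have hD := hD0_pos.ne'
  simp only [Gfun, zero_div, Real.cos_zero, Real.sin_zero, mul_one, mul_zero, add_zero, sub_zero]
  rw [sub_eq_zero]
  rw [div_eq_iff]
  · field_simp
    ring_nf
  · simpa using hD

lemma Gfun_deriv : HasDerivAt Gfun
    (((Real.pi * (2 - Real.sqrt 2) / (Real.pi - 2 * Real.sqrt 2)) * (Real.sqrt 2 * 0 - Real.sqrt 2 * (1/2)) *
        (Real.sqrt 2 * (4 - Real.pi) / (Real.pi - 2 * Real.sqrt 2) + Real.sqrt 2 * 1 + Real.sqrt 2 * 0) -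
      (Real.pi * (2 - Real.sqrt 2) / (Real.pi - 2 * Real.sqrt 2)) * (Real.sqrt 2 * 1 - Real.sqrt 2 * 0) *
        (0 + Real.sqrt 2 * 0 + Real.sqrt 2 * (1/2))) /
      (Real.sqrt 2 * (4 - Real.pi) / (Real.pi - 2 * Real.sqrt 2) + Real.sqrt 2 * 1 + Real.sqrt 2 * 0) ^ 2
      + 1) 0 := by
  have hhalf : HasDerivAt (fun s : ℝ => s / 2) (1/2) 0 := (hasDerivAt_id 0).div_const 2
  have hcos : HasDerivAt (fun s : ℝ => Real.cos (s/2)) 0 0 := by simpa using hhalf.cos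
  have hsin : HasDerivAt (fun s : ℝ => Real.sin (s/2)) (1/2) 0 := by simpa using hhalf.sin
  set A := Real.pi * (2 - Real.sqrt 2) / (Real.pi - 2 * Real.sqrt 2) with hA
  set B := Real.sqrt 2 * (4 - Real.pi) / (Real.pi - 2 * Real.sqrt 2) with hB
  have hN : HasDerivAt (fun s : ℝ => A * (Real.sqrt 2 * Real.cos (s/2) - Real.sqrt 2 * Real.sin (s/2)))
      (A * (Real.sqrt 2 * 0 - Real.sqrt 2 * (1/2))) 0 :=
    ((hcos.const_mul (Real.sqrt 2)).sub (hsin.const_mul (Real.sqrt 2))).const_mul A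
  have hDena : HasDerivAt (fun s : ℝ => B + Real.sqrt 2 * Real.cos (s/2) + Real.sqrt 2 * Real.sin (s/2))
      (0 + Real.sqrt 2 * 0 + Real.sqrt 2 * (1/2)) 0 :=
    (((hasDerivAt_const (0:ℝ) B).add (hcos.const_mul (Real.sqrt 2))).add (hsin.const_mul (Real.sqrt 2)))
  have hDne : (fun s : ℝ => B + Real.sqrt 2 * Real.cos (s/2) + Real.sqrt 2 * Real.sin (s/2)) 0 ≠ 0 := by
    simpa using hD0_pos.ne'
  have hQ := hN.div hDena hDne
  have hfinal := hQ.sub ((hasDerivAt_const (0:ℝ) (Real.pi/2)).sub (hasDerivAt_id 0))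
  have : Gfun = fun s => A * (Real.sqrt 2 * Real.cos (s/2) - Real.sqrt 2 * Real.sin (s/2)) /
      (B + Real.sqrt 2 * Real.cos (s/2) + Real.sqrt 2 * Real.sin (s/2)) - (Real.pi/2 - s) := by
    funext s; simp [Gfun, hA, hB, mul_div_assoc]
  rw [this]
  convert hfinal using 1
  · rfl
  · rfl
  · rfl
  · simp [Real.cos_zero, Real.sin_zero]

lemma key_eq {t : ℝ} (ht : t ∈ Set.Ioo 0 (Real.pi/2)) :
    phiBound (Real.sin t) - Real.arcsin (Real.sin t) = Gfun (Real.pi/2 - t) := by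
  obtain ⟨ht0, ht2⟩ := ht
  set s := Real.pi/2 - t with hs
  have hs0 : 0 < s := by simp [hs]; linarith
  have hs2 : s < Real.pi/2 := by simp [hs]; linarith
  have hsin : Real.sin t = Real.cos s := by
    rw [hs, Real.cos_pi_div_two_sub]
  have harc : Real.arcsin (Real.sin t) = t :=
    Real.arcsin_sin (by linarith [Real.pi_pos]) (le_of_lt ht2)
  have hcosh : 0 ≤ Real.cos (s/2) :=
    Real.cos_nonneg_of_mem_Icc ⟨by linarith, by linarith⟩
  have hsinh : 0 ≤ Real.sin (s/2) :=
    Real.sin_nonneg_of_nonneg_of_le_pi (by linarith) (by nlinarith [Real.pi_pos])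
  have h1 : Real.sqrt (1 + Real.cos s) = Real.sqrt 2 * Real.cos (s/2) := by
    rw [show (1:ℝ) + Real.cos s = (Real.sqrt 2 * Real.cos (s/2))^2 by
      rw [mul_pow, Real.sq_sqrt (by norm_num : (0:ℝ) ≤ 2), Real.cos_sq]
      rw [show 2 * (s/2) = s by ring]; ring]
    exact Real.sqrt_sq (by positivity)
  have h2 : Real.sqrt (1 - Real.cos s) = Real.sqrt 2 * Real.sin (s/2) := by
    rw [show (1:ℝ) - Real.cos s = (Real.sqrt 2 * Real.sin (s/2))^2 by
      rw [mul_pow, Real.sq_sqrt (by norm_num : (0:ℝ) ≤ 2), Real.sin_sq_eq_half_sub]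
      rw [show 2 * (s/2) = s by ring]; ring]
    exact Real.sqrt_sq (by positivity)
  rw [harc, hsin, phiBound, h1, h2, Gfun, hs]
  ring_nf

lemma beta_pos : 0 < ((16 * Real.sqrt 2 - 16) + (8 - 4 * Real.sqrt 2) * Real.pi -
      Real.sqrt 2 * Real.pi ^ 2) /
    ((2 * Real.sqrt 2 - 2) * Real.pi ^ 3) := by
  have ha : Real.sqrt 2 ^ 2 = 2 := Real.sq_sqrt (by norm_num)
  have ha0 : (0:ℝ) ≤ Real.sqrt 2 := Real.sqrt_nonneg 2
  have hal : 1.4142135 < Real.sqrt 2 := by nlinarith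
  have hau : Real.sqrt 2 < 1.4142136 := by nlinarith
  have hpl := Real.pi_gt_d6
  have hpu := Real.pi_lt_d6
  apply div_pos
  · nlinarith
  · exact mul_pos (by nlinarith) (pow_pos Real.pi_pos 3)

lemma alg (a q : ℝ) (ha : a^2 = 2) (hp : q - 2*a ≠ 0) (hq : q ≠ 0) (h2 : 2*a-2 ≠ 0) :
    ((q * (2 - a) / (q - 2 * a) * (a * 0 - a * (1/2)) * (a * (4 - q) / (q - 2*a) + a * 1 + a * 0) -
      q * (2 - a) / (q - 2 * a) * (a * 1 - a * 0) * (0 + a * 0 + a * (1/2))) /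
      (a * (4 - q) / (q - 2*a) + a * 1 + a * 0) ^ 2 + 1) * ((q/2)^3)⁻¹ =
    ((16 * a - 16) + (8 - 4 * a) * q - a * q ^ 2) / ((2 * a - 2) * q ^ 3) := by
  have hane : a ≠ 0 := by intro h; rw [h] at ha; norm_num at ha
  have h42 : 4 - 2*a ≠ 0 := by
    intro h; have : a = 2 := by linarith
    rw [this] at ha; norm_num at ha
  have hDeq : a * (4 - q) / (q - 2*a) + a * 1 + a * 0 = a * (4 - 2*a) / (q - 2*a) := by
    rw [div_add' _ _ _ hp, div_add' _ _ _ hp]; congr 1; ring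
  rw [hDeq]
  have hD2 : a * (4 - 2*a) ≠ 0 := mul_ne_zero hane h42
  have ha1 : a - 1 ≠ 0 := by intro h; apply h2; linarith
  field_simp
  ring_nf
  linear_combination (4*a^2*q^2 - 16*a^2*q - 8*a*q^2 + 32*a*q) * ha

theorem limit_at_pi_div_two :
    Tendsto
      (fun t : ℝ =>
        (phiBound (Real.sin t) - Real.arcsin (Real.sin t)) /
          (t ^ 3 * (Real.pi / 2 - t)))
      (nhdsWithin (Real.pi / 2) (Set.Iio (Real.pi / 2)))
      (nhds (((16 * Real.sqrt 2 - 16) + (8 - 4 * Real.sqrt 2) * Real.pi -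
          Real.sqrt 2 * Real.pi ^ 2) /
        ((2 * Real.sqrt 2 - 2) * Real.pi ^ 3))) ∧
    0 < ((16 * Real.sqrt 2 - 16) + (8 - 4 * Real.sqrt 2) * Real.pi -
          Real.sqrt 2 * Real.pi ^ 2) /
        ((2 * Real.sqrt 2 - 2) * Real.pi ^ 3) := by
  refine ⟨?_, beta_pos⟩
  have ha : Real.sqrt 2 ^ 2 = 2 := Real.sq_sqrt (by norm_num)
  have hmap : Tendsto (fun t : ℝ => Real.pi/2 - t)
      (nhdsWithin (Real.pi/2) (Set.Iio (Real.pi/2))) (nhdsWithin 0 {(0:ℝ)}ᶜ) := by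
    rw [tendsto_nhdsWithin_iff]
    constructor
    · have h : Tendsto (fun t : ℝ => Real.pi/2 - t) (nhds (Real.pi/2))
          (nhds (Real.pi/2 - Real.pi/2)) := tendsto_const_nhds.sub tendsto_id
      simpa using h.mono_left nhdsWithin_le_nhds
    · filter_upwards [self_mem_nhdsWithin] with t ht
      exact sub_ne_zero.mpr (ne_of_gt ht)
  have hslope := (hasDerivAt_iff_tendsto_slope.mp Gfun_deriv).comp hmap
  have hcube : Tendsto (fun t : ℝ => ((t^3 : ℝ))⁻¹)
      (nhdsWithin (Real.pi/2) (Set.Iio (Real.pi/2))) (nhds (((Real.pi/2)^3)⁻¹)) := by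
    apply Tendsto.mono_left _ nhdsWithin_le_nhds
    exact (((continuous_pow 3).tendsto _).inv₀ (by positivity))
  have hmul := hslope.mul hcube
  rw [alg (Real.sqrt 2) Real.pi ha hp_pos.ne' Real.pi_ne_zero
    (by nlinarith [sqrt2_gt] : 2 * Real.sqrt 2 - 2 ≠ 0)] at hmul
  refine hmul.congr' ?_
  filter_upwards [Ioo_mem_nhdsLT_of_mem (by constructor <;> [exact Real.pi_div_two_pos; exact le_refl _])]
    with t ht
  have ht0 := ht.1
  have ht2 := ht.2
  have hsne : Real.pi/2 - t ≠ 0 := sub_ne_zero.mpr (ne_of_gt ht2)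
  have htne : t ≠ 0 := ne_of_gt ht0
  simp only [Function.comp]
  rw [slope_def_field, Gfun_zero, sub_zero, sub_zero, ← key_eq ht]
  field_simp
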